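/- Let m ≥ 2 and let T be the perfect rooted m-ary tree of depth r. If t is odd and 1 ≤ t ≤ r, then the number of paths of length t in T equals m^((t−1)/2) · (V_R(r) − V_R((t−1)/2)) − ((t−1)/2) · m^(t−1), where V_R(d) is the number of vertices in the perfect rooted m-ary tree of depth d. -/

import Mathlib

set_option linter.unusedSectionVars false
set_option linter.unusedVariables false
set_option maxHeartbeats 1600000

open SimpleGraph Finset

/-- `IsPerfectRootedMary m r H ρ` says that `H` is the perfect rooted `m`-ary tree of
depth `r` with root `ρ`: a tree whose root `ρ` has degree `m`, in which every other
vertex has degree `1` or `m + 1`, whose maximum distance from `ρ` to a vertex is `r`,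
and in which every degree-`1` vertex is at distance exactly `r` from `ρ`.
(For `r = 0` the root-degree condition is dropped, so that the one-vertex tree is the
perfect rooted tree of depth `0`.) -/
def IsPerfectRootedMary (m r : ℕ) {W : Type} [Fintype W] (H : SimpleGraph W)
    [DecidableRel H.Adj] (ρ : W) : Prop :=
  H.IsTree ∧
    (0 < r → H.degree ρ = m) ∧
    (∀ v : W, v ≠ ρ → H.degree v = 1 ∨ H.degree v = m + 1) ∧
    (∀ v : W, H.dist ρ v ≤ r) ∧
    (∃ v : W, H.dist ρ v = r) ∧
    (∀ v : W, H.degree v = 1 → H.dist ρ v = r)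

/-- The number of paths of length `t` in `H`, i.e. the number of unordered pairs of
vertices at distance exactly `t` from each other. -/
noncomputable def pathCount {W : Type} [Fintype W] [DecidableEq W] (H : SimpleGraph W) (t : ℕ) : ℕ :=
  (Finset.univ.filter fun p : Sym2 W => ∃ u v : W, p = s(u, v) ∧ H.dist u v = t).card

section Development

variable {W : Type} [Fintype W] [DecidableEq W] {G : SimpleGraph W} [DecidableRel G.Adj] {ρ : W}

lemma tree_path_length (hT : G.IsTree) {u v : W} (p : G.Walk u v) (hp : p.IsPath) :
    p.length = G.dist u v := by
  obtain ⟨q, hq, hql⟩ := hT.isConnected.exists_path_of_dist u v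
  rw [(hT.existsUnique_path u v).unique hp hq, hql]

lemma dist_le_of_mem_support {u v x : W} (p : G.Walk u v) (hx : x ∈ p.support) :
    G.dist u x ≤ p.length :=
  le_trans (SimpleGraph.dist_le _) (p.length_takeUntil_le hx)

lemma adj_dist_ne (hT : G.IsTree) {u v : W} (h : G.Adj u v)
    (hle : G.dist ρ u ≤ G.dist ρ v) : G.dist ρ v = G.dist ρ u + 1 := by
  have htri : G.dist ρ v ≤ G.dist ρ u + 1 := by
    have := hT.isConnected.dist_triangle (u := ρ) (v := u) (w := v)
    simpa [SimpleGraph.dist_eq_one_iff_adj.2 h] using this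
  rcases Nat.lt_or_ge (G.dist ρ v) (G.dist ρ u + 1) with hlt | hge
  · exfalso
    have heq : G.dist ρ v = G.dist ρ u := le_antisymm (Nat.lt_succ_iff.1 hlt) hle
    obtain ⟨P, hP, hPl⟩ := hT.isConnected.exists_path_of_dist ρ u
    have hvP : v ∉ P.support := by
      intro hv
      have h1 : G.dist ρ u ≤ (P.takeUntil v hv).length := by
        rw [← heq]; exact SimpleGraph.dist_le _
      have h2 : (P.takeUntil v hv).length + (P.dropUntil v hv).length = G.dist ρ u := by
        rw [← hPl, ← SimpleGraph.Walk.length_append, SimpleGraph.Walk.take_spec]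
      have h3 : (P.dropUntil v hv).length = 0 := by omega
      have := SimpleGraph.Walk.eq_of_length_eq_zero h3
      exact G.irrefl (this ▸ h)
    have hPath : (P.concat h).IsPath := by
      rw [SimpleGraph.Walk.isPath_def, SimpleGraph.Walk.support_concat]
      refine List.Nodup.append ((SimpleGraph.Walk.isPath_def _).1 hP) (by simp) ?_
      intro a ha hav
      simp only [List.mem_singleton] at hav
      exact hvP (hav ▸ ha)
    have := tree_path_length hT _ hPath
    rw [SimpleGraph.Walk.length_concat, hPl, heq] at this
    omega
  · omega

lemma adj_dist_cases (hT : G.IsTree) {u v : W} (h : G.Adj u v) :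
    G.dist ρ v = G.dist ρ u + 1 ∨ G.dist ρ u = G.dist ρ v + 1 := by
  rcases Nat.le_total (G.dist ρ u) (G.dist ρ v) with hle | hle
  · exact Or.inl (adj_dist_ne hT h hle)
  · exact Or.inr (adj_dist_ne hT h.symm hle)

open Classical in
noncomputable def par (G : SimpleGraph W) (ρ : W) (v : W) : W :=
  if h : ∃ u, G.Adj v u ∧ G.dist ρ u + 1 = G.dist ρ v then h.choose else ρ

lemma dist_root_eq_zero_iff (hT : G.IsTree) {v : W} : G.dist ρ v = 0 ↔ v = ρ := by
  rw [hT.isConnected.dist_eq_zero_iff, eq_comm]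

lemma par_spec (hT : G.IsTree) {v : W} (hv : v ≠ ρ) :
    G.Adj v (par G ρ v) ∧ G.dist ρ (par G ρ v) + 1 = G.dist ρ v := by
  have hex : ∃ u, G.Adj v u ∧ G.dist ρ u + 1 = G.dist ρ v := by
    have hpos : 0 < G.dist ρ v := hT.isConnected.pos_dist_of_ne (Ne.symm hv)
    obtain ⟨q, hq, hql⟩ := hT.isConnected.exists_path_of_dist v ρ
    cases q with
    | nil => exact absurd rfl hv
    | @cons _ u _ h' q' =>
      refine ⟨u, h', ?_⟩
      have h1 : q'.length = G.dist u ρ := tree_path_length hT q' hq.of_cons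
      have h2 : q'.length + 1 = G.dist v ρ := by simpa using hql
      rw [SimpleGraph.dist_comm (u := ρ) (v := u), SimpleGraph.dist_comm (u := ρ) (v := v), ← h1]
      omega
  simp only [par]
  rw [dif_pos hex]
  exact hex.choose_spec

lemma par_eq (hT : G.IsTree) {v u : W} (h : G.Adj v u) (hd : G.dist ρ u + 1 = G.dist ρ v) :
    par G ρ v = u := by
  have hv : v ≠ ρ := by
    intro hvr; rw [hvr, (dist_root_eq_zero_iff hT).2 rfl] at hd; omega
  obtain ⟨h2, hd2⟩ := par_spec hT hv
  -- uniqueness of parent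
  set u1 := par G ρ v with hu1
  by_contra hne
  have key : ∀ (a : W), G.Adj v a → G.dist ρ a + 1 = G.dist ρ v →
      ∃ P : G.Walk ρ v, P.IsPath ∧ P.reverse.getVert 1 = a := by
    intro a ha hda
    obtain ⟨Q, hQ, hQl⟩ := hT.isConnected.exists_path_of_dist ρ a
    have hvQ : v ∉ Q.support := by
      intro hmem
      have := dist_le_of_mem_support Q hmem
      rw [hQl] at this; omega
    refine ⟨Q.concat ha.symm, ?_, ?_⟩
    · rw [SimpleGraph.Walk.isPath_def, SimpleGraph.Walk.support_concat]
      refine List.Nodup.append ((SimpleGraph.Walk.isPath_def _).1 hQ) (by simp) ?_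
      intro x hx hx2
      simp only [List.mem_singleton] at hx2
      exact hvQ (hx2 ▸ hx)
    · rw [SimpleGraph.Walk.reverse_concat]
      exact (SimpleGraph.Walk.getVert_cons_succ _ _).trans (SimpleGraph.Walk.getVert_zero _)
  obtain ⟨P1, hP1, hg1⟩ := key u1 h2 hd2
  obtain ⟨P2, hP2, hg2⟩ := key u h hd
  have : P1 = P2 := (hT.existsUnique_path ρ v).unique hP1 hP2
  rw [this, hg2] at hg1
  exact hne hg1.symm

lemma par_root (hT : G.IsTree) : par G ρ ρ = ρ := by
  simp only [par]
  rw [dif_neg]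
  rintro ⟨u, -, hd⟩
  rw [(dist_root_eq_zero_iff hT).2 rfl] at hd
  omega

lemma parIter_dist (hT : G.IsTree) (v : W) {k : ℕ} (hk : k ≤ G.dist ρ v) :
    G.dist ρ ((par G ρ)^[k] v) + k = G.dist ρ v := by
  induction k with
  | zero => simp
  | succ n ih =>
    have hn : n ≤ G.dist ρ v := by omega
    have h1 := ih hn
    have hne : (par G ρ)^[n] v ≠ ρ := by
      intro hroot
      rw [hroot, (dist_root_eq_zero_iff hT).2 rfl] at h1
      omega
    have h2 := (par_spec hT hne).2
    rw [Function.iterate_succ_apply']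
    omega

lemma parIter_root (hT : G.IsTree) (v : W) : (par G ρ)^[G.dist ρ v] v = ρ := by
  have := parIter_dist (ρ := ρ) hT v (le_refl (G.dist ρ v))
  exact (dist_root_eq_zero_iff hT).1 (by omega)

lemma exists_upWalk (hT : G.IsTree) (v : W) {k : ℕ} (hk : k ≤ G.dist ρ v) :
    ∃ w : G.Walk v ((par G ρ)^[k] v), w.length = k ∧
      w.support = (List.range (k+1)).map (fun a => (par G ρ)^[a] v) := by
  induction k with
  | zero => exact ⟨SimpleGraph.Walk.nil.copy rfl (by simp), by simp, by simp⟩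
  | succ n ih =>
    obtain ⟨w, hwl, hws⟩ := ih (by omega)
    have hne : (par G ρ)^[n] v ≠ ρ := by
      intro hroot
      have := parIter_dist (ρ := ρ) hT v (show n ≤ G.dist ρ v by omega)
      rw [hroot, (dist_root_eq_zero_iff hT).2 rfl] at this
      omega
    have hadj : G.Adj ((par G ρ)^[n] v) ((par G ρ)^[n+1] v) := by
      rw [Function.iterate_succ_apply']
      exact (par_spec hT hne).1
    refine ⟨w.concat hadj, by rw [SimpleGraph.Walk.length_concat, hwl], ?_⟩
    rw [SimpleGraph.Walk.support_concat, hws,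
      List.range_succ (n := n+1), List.map_append]
    simp

/-- The depth of the deepest common ancestor of `u` and `v`. -/
noncomputable def meet (G : SimpleGraph W) [DecidableRel G.Adj] [DecidableEq W]
    (ρ u v : W) : ℕ :=
  if h : ((Finset.range (min (G.dist ρ u) (G.dist ρ v) + 1)).filter
      (fun ℓ => (par G ρ)^[G.dist ρ u - ℓ] u = (par G ρ)^[G.dist ρ v - ℓ] v)).Nonempty
  then ((Finset.range (min (G.dist ρ u) (G.dist ρ v) + 1)).filter
      (fun ℓ => (par G ρ)^[G.dist ρ u - ℓ] u = (par G ρ)^[G.dist ρ v - ℓ] v)).max' h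
  else 0

lemma meet_S_nonempty (hT : G.IsTree) (u v : W) :
    ((Finset.range (min (G.dist ρ u) (G.dist ρ v) + 1)).filter
      (fun ℓ => (par G ρ)^[G.dist ρ u - ℓ] u = (par G ρ)^[G.dist ρ v - ℓ] v)).Nonempty := by
  refine ⟨0, ?_⟩
  simp only [Finset.mem_filter, Finset.mem_range]
  exact ⟨by omega, by rw [Nat.sub_zero, Nat.sub_zero, parIter_root hT, parIter_root hT]⟩

lemma meet_spec (hT : G.IsTree) (u v : W) :
    meet G ρ u v ≤ G.dist ρ u ∧ meet G ρ u v ≤ G.dist ρ v ∧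
      (par G ρ)^[G.dist ρ u - meet G ρ u v] u = (par G ρ)^[G.dist ρ v - meet G ρ u v] v := by
  rw [meet, dif_pos (meet_S_nonempty hT u v)]
  have := Finset.max'_mem _ (meet_S_nonempty hT (ρ := ρ) u v)
  simp only [Finset.mem_filter, Finset.mem_range] at this
  exact ⟨by omega, by omega, this.2⟩

lemma meet_max (hT : G.IsTree) {u v : W} {ℓ : ℕ} (h1 : ℓ ≤ G.dist ρ u) (h2 : ℓ ≤ G.dist ρ v)
    (hcom : (par G ρ)^[G.dist ρ u - ℓ] u = (par G ρ)^[G.dist ρ v - ℓ] v) :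
    ℓ ≤ meet G ρ u v := by
  rw [meet, dif_pos (meet_S_nonempty hT u v)]
  refine Finset.le_max' _ ℓ ?_
  simp only [Finset.mem_filter, Finset.mem_range]
  exact ⟨by omega, hcom⟩

lemma tree_dist (hT : G.IsTree) (u v : W) :
    G.dist u v + 2 * meet G ρ u v = G.dist ρ u + G.dist ρ v := by
  obtain ⟨hcu, hcv, hcom⟩ := meet_spec hT u v
  set c := meet G ρ u v with hc
  set du := G.dist ρ u with hdu
  set dv := G.dist ρ v with hdv
  obtain ⟨wu, hwul, hwus⟩ := exists_upWalk hT u (show du - c ≤ du by omega)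
  obtain ⟨wv, hwvl, hwvs⟩ := exists_upWalk hT v (show dv - c ≤ dv by omega)
  set P := wu.append ((wv.copy rfl hcom.symm).reverse) with hP
  have hPl : P.length = (du - c) + (dv - c) := by
    simp [hP, SimpleGraph.Walk.length_append, hwul, hwvl]
  have hl2 : ((wv.copy rfl hcom.symm).reverse).support.tail
      = ((List.range (dv - c)).map (fun a => (par G ρ)^[a] v)).reverse := by
    rw [SimpleGraph.Walk.support_reverse, SimpleGraph.Walk.support_copy, hwvs,
      List.range_succ, List.map_append, List.reverse_append]
    simp
  have hinj : ∀ x : W, ∀ a b : ℕ, a ≤ G.dist ρ x → b ≤ G.dist ρ x →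
      (par G ρ)^[a] x = (par G ρ)^[b] x → a = b := by
    intro x a b ha hb heq
    have h1 := parIter_dist hT x ha
    have h2 := parIter_dist hT x hb
    rw [heq] at h1
    omega
  have hPp : P.IsPath := by
    rw [SimpleGraph.Walk.isPath_def, SimpleGraph.Walk.support_append, hl2, hwus]
    refine List.Nodup.append ?_ ?_ ?_
    · refine List.Nodup.map_on ?_ List.nodup_range
      intro a ha b hb heq
      simp only [List.mem_range] at ha hb
      exact hinj u a b (by omega) (by omega) heq
    · rw [List.nodup_reverse]
      refine List.Nodup.map_on ?_ List.nodup_range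
      intro a ha b hb heq
      simp only [List.mem_range] at ha hb
      exact hinj v a b (by omega) (by omega) heq
    · intro x hx1 hx2
      rw [List.mem_map] at hx1
      rw [List.mem_reverse, List.mem_map] at hx2
      obtain ⟨a, ha, rfl⟩ := hx1
      obtain ⟨b, hb, hbeq⟩ := hx2
      rw [List.mem_range] at ha hb
      -- depths
      have hda := parIter_dist hT u (show a ≤ du by omega)
      have hdb := parIter_dist hT v (show b ≤ dv by omega)
      rw [hbeq] at hdb
      -- the common vertex gives a common ancestor deeper than c
      have hl' : dv - b ≤ meet G ρ u v := by
        refine meet_max hT (by omega) (by omega) ?_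
        have e1 : du - (dv - b) = a := by omega
        have e2 : dv - (dv - b) = b := by omega
        rw [e1, e2]
        exact hbeq.symm
      omega
  have := tree_path_length hT P hPp
  rw [hPl] at this
  omega

lemma meet_eq (hT : G.IsTree) {u v : W} {i j : ℕ} (hiu : i ≤ G.dist ρ u)
    (hjv : j ≤ G.dist ρ v) (hd : G.dist ρ u + j = G.dist ρ v + i)
    (hcom : (par G ρ)^[i] u = (par G ρ)^[j] v)
    (hmin : i = 0 ∨ (1 ≤ i ∧ 1 ≤ j ∧ (par G ρ)^[i-1] u ≠ (par G ρ)^[j-1] v)) :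
    meet G ρ u v + j = G.dist ρ v := by
  set du := G.dist ρ u with hdu
  set dv := G.dist ρ v with hdv
  set c := meet G ρ u v with hc
  obtain ⟨hcu, hcv, hcom'⟩ := meet_spec (ρ := ρ) hT u v
  have hge : dv - j ≤ c := by
    refine meet_max (ρ := ρ) hT (by omega) (by omega) ?_
    have e1 : du - (dv - j) = i := by omega
    have e2 : dv - (dv - j) = j := by omega
    rw [e1, e2]; exact hcom
  rcases Nat.lt_or_ge (dv - j) c with hlt | hge2
  · exfalso
    rcases hmin with h0 | ⟨hi1, hj1, hne⟩
    · omega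
    · have e1 : (i-1) - (du - c) + (du - c) = i - 1 := by omega
      have e2 : (i-1) - (du - c) + (dv - c) = j - 1 := by omega
      refine hne ?_
      rw [← e1, Function.iterate_add_apply, hcom', ← Function.iterate_add_apply, e2]
  · omega

/-- children of a vertex -/
noncomputable def childSet (G : SimpleGraph W) [DecidableRel G.Adj] [DecidableEq W]
    (ρ v : W) : Finset W :=
  Finset.univ.filter fun w => par G ρ w = v ∧ w ≠ ρ

/-- descendants at distance `s` below `w` -/
noncomputable def decSet (G : SimpleGraph W) [DecidableRel G.Adj] [DecidableEq W]
    (ρ w : W) (s : ℕ) : Finset W :=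
  Finset.univ.filter fun u => (par G ρ)^[s] u = w ∧ G.dist ρ u = G.dist ρ w + s

lemma decSet_def (G : SimpleGraph W) [DecidableRel G.Adj] [DecidableEq W] (ρ w : W) (s : ℕ) :
    decSet G ρ w s =
      Finset.univ.filter (fun u => (par G ρ)^[s] u = w ∧ G.dist ρ u = G.dist ρ w + s) := rfl

lemma mem_childSet_iff (hT : G.IsTree) {v w : W} :
    w ∈ childSet G ρ v ↔ (par G ρ w = v ∧ w ≠ ρ) := by
  simp [childSet]

lemma childSet_depth (hT : G.IsTree) {v w : W} (h : w ∈ childSet G ρ v) :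
    G.dist ρ w = G.dist ρ v + 1 := by
  rw [mem_childSet_iff hT] at h
  have := (par_spec hT h.2).2
  rw [h.1] at this
  omega

lemma degree_eq_childSet (hT : G.IsTree) (v : W) :
    G.degree v = (childSet G ρ v).card + (if v = ρ then 0 else 1) := by
  have hset : G.neighborFinset v =
      (childSet G ρ v) ∪ (if v = ρ then ∅ else {par G ρ v}) := by
    ext w
    rw [SimpleGraph.mem_neighborFinset, Finset.mem_union]
    constructor
    · intro h
      rcases adj_dist_cases (ρ := ρ) hT h with hd | hd
      · left
        rw [mem_childSet_iff hT]
        refine ⟨par_eq hT h.symm (by omega), ?_⟩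
        intro hroot
        rw [hroot, (dist_root_eq_zero_iff hT).2 rfl] at hd
        omega
      · right
        have hvρ : v ≠ ρ := by
          intro hroot
          rw [hroot, (dist_root_eq_zero_iff hT).2 rfl] at hd
          omega
        rw [if_neg hvρ, Finset.mem_singleton, par_eq hT h hd.symm]
    · rintro (hmem | hmem)
      · rw [mem_childSet_iff hT] at hmem
        have := (par_spec hT hmem.2).1
        rw [hmem.1] at this
        exact this.symm
      · by_cases hvρ : v = ρ
        · simp [hvρ] at hmem
        · rw [if_neg hvρ, Finset.mem_singleton] at hmem
          rw [hmem]
          exact (par_spec hT hvρ).1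
  rw [SimpleGraph.degree, hset, Finset.card_union_of_disjoint]
  · congr 1
    by_cases hvρ : v = ρ <;> simp [hvρ]
  · by_cases hvρ : v = ρ
    · simp [hvρ]
    · rw [if_neg hvρ]
      simp only [Finset.disjoint_singleton_right, mem_childSet_iff hT]
      rintro ⟨hpar, hne⟩
      have h1 := (par_spec hT hvρ).2
      have h2 := (par_spec hT hne).2
      rw [hpar] at h2
      omega

lemma childSet_card {m r : ℕ} (hG : IsPerfectRootedMary m r G ρ) (hm : 2 ≤ m) (v : W) :
    (childSet G ρ v).card = if G.dist ρ v < r then m else 0 := by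
  obtain ⟨hT, hroot, hdeg, hdle, -, hleaf⟩ := hG
  by_cases hlt : G.dist ρ v < r
  · rw [if_pos hlt]
    by_cases hvρ : v = ρ
    · have h0 : (0 : ℕ) < r := by
        have := (dist_root_eq_zero_iff (ρ := ρ) hT).2 rfl
        subst hvρ; omega
      have hdd := degree_eq_childSet (ρ := ρ) hT v
      rw [if_pos hvρ] at hdd
      rw [hvρ] at hdd
      rw [hroot h0] at hdd
      rw [hvρ]
      omega
    · have hd := degree_eq_childSet (ρ := ρ) hT v
      rw [if_neg hvρ] at hd
      rcases hdeg v hvρ with h1 | h1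
      · exfalso
        have := hleaf v h1
        omega
      · omega
  · rw [if_neg hlt]
    rw [Finset.card_eq_zero, Finset.eq_empty_iff_forall_notMem]
    intro w hw
    have := childSet_depth (ρ := ρ) hT hw
    have := hdle w
    omega

lemma decSet_zero (w : W) : decSet G ρ w 0 = {w} := by
  ext u
  rw [decSet_def, Finset.mem_filter]
  simp only [decSet_def, Finset.mem_filter, Finset.mem_univ, true_and, Function.iterate_zero_apply,
    Finset.mem_singleton, Nat.add_zero]
  constructor
  · rintro ⟨rfl, -⟩; rfl
  · rintro rfl; exact ⟨rfl, rfl⟩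

lemma decSet_succ (hT : G.IsTree) (w : W) (s : ℕ) :
    decSet G ρ w (s+1) = (decSet G ρ w s).biUnion (fun z => childSet G ρ z) := by
  ext u
  simp only [decSet, Finset.mem_filter, Finset.mem_univ, true_and, Finset.mem_biUnion]
  constructor
  · rintro ⟨hiter, hdist⟩
    have hune : u ≠ ρ := by
      intro hroot
      rw [hroot, (dist_root_eq_zero_iff hT).2 rfl] at hdist
      omega
    refine ⟨par G ρ u, ⟨?_, ?_⟩, ?_⟩
    · rw [← Function.iterate_succ_apply]
      exact hiter
    · have := (par_spec hT hune).2
      omega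
    · rw [mem_childSet_iff hT]
      exact ⟨rfl, hune⟩
  · rintro ⟨z, ⟨hiter, hdist⟩, hchild⟩
    rw [mem_childSet_iff hT] at hchild
    have hdu := (par_spec hT hchild.2).2
    rw [hchild.1] at hdu
    constructor
    · rw [Function.iterate_succ_apply, hchild.1, hiter]
    · omega

lemma decSet_card {m r : ℕ} (hG : IsPerfectRootedMary m r G ρ) (hm : 2 ≤ m) (w : W) (s : ℕ) :
    (decSet G ρ w s).card = if G.dist ρ w + s ≤ r then m ^ s else 0 := by
  obtain ⟨hT, -, -, hdle, -, -⟩ := id hG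
  induction s with
  | zero =>
    rw [decSet_zero, if_pos (by simpa using hdle w)]
    simp
  | succ n ih =>
    rw [decSet_succ (ρ := ρ) hT w n, Finset.card_biUnion]
    · have hsum : ∀ z ∈ decSet G ρ w n, (childSet G ρ z).card =
          if G.dist ρ w + n < r then m else 0 := by
        intro z hz
        simp only [decSet, Finset.mem_filter] at hz
        rw [childSet_card hG hm z, hz.2.2]
      rw [Finset.sum_congr rfl hsum, Finset.sum_const, ih, smul_eq_mul]
      split_ifs <;> first | (exfalso; omega) | rw [pow_succ] | simp
    · intro z1 h1 z2 h2 hne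
      simp only [Finset.disjoint_left]
      intro a ha1 ha2
      rw [mem_childSet_iff hT] at ha1 ha2
      exact hne (by rw [← ha1.1, ← ha2.1])

lemma level_eq_decSet {m r : ℕ} (hG : IsPerfectRootedMary m r G ρ) (d : ℕ) :
    (Finset.univ.filter fun v => G.dist ρ v = d) = decSet G ρ ρ d := by
  obtain ⟨hT, -, -, -, -, -⟩ := hG
  ext u
  simp only [Finset.mem_filter, Finset.mem_univ, true_and, decSet,
    (dist_root_eq_zero_iff (ρ := ρ) hT).2 rfl]
  constructor
  · intro hd
    refine ⟨?_, by omega⟩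
    have := parIter_dist (ρ := ρ) hT u (le_of_eq hd.symm)
    rw [hd] at this
    exact (dist_root_eq_zero_iff hT).1 (by omega)
  · rintro ⟨-, h⟩
    omega

lemma level_card {m r : ℕ} (hG : IsPerfectRootedMary m r G ρ) (hm : 2 ≤ m) {d : ℕ}
    (hd : d ≤ r) : (Finset.univ.filter fun v => G.dist ρ v = d).card = m ^ d := by
  rw [level_eq_decSet hG, decSet_card hG hm]
  rw [if_pos]
  rw [(dist_root_eq_zero_iff (ρ := ρ) hG.1).2 rfl]
  omega

lemma card_univ_levels {m r : ℕ} (hG : IsPerfectRootedMary m r G ρ) (hm : 2 ≤ m) :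
    (Fintype.card W) = ∑ d ∈ Finset.range (r+1), m ^ d := by
  have h := Finset.card_eq_sum_card_fiberwise
    (f := fun v => G.dist ρ v) (s := Finset.univ) (t := Finset.range (r+1))
    (fun x _ => by simp [Nat.lt_succ_iff, hG.2.2.2.1 x])
  rw [← Finset.card_univ, h]
  exact Finset.sum_congr rfl fun d hd => level_card hG hm (by simpa [Nat.lt_succ_iff] using hd)

noncomputable def ASet (G : SimpleGraph W) [DecidableRel G.Adj] [DecidableEq W]
    (ρ : W) (t : ℕ) (v : W) : Finset W :=
  Finset.univ.filter fun u => G.dist u v = t ∧ G.dist ρ u < G.dist ρ v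

noncomputable def AjSet (G : SimpleGraph W) [DecidableRel G.Adj] [DecidableEq W]
    (ρ : W) (t : ℕ) (v : W) (j : ℕ) : Finset W :=
  Finset.univ.filter fun u => (par G ρ)^[t-j] u = (par G ρ)^[j] v ∧
    G.dist ρ u + 2*j = G.dist ρ v + t ∧
    (j = t ∨ (par G ρ)^[t-j-1] u ≠ (par G ρ)^[j-1] v)

lemma ASet_eq_biUnion (hT : G.IsTree) {t k : ℕ} (htk : t = 2*k+1) (v : W) :
    ASet G ρ t v = (Finset.Icc (k+1) (min (G.dist ρ v) t)).biUnion (AjSet G ρ t v) := by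
  ext u
  simp only [ASet, AjSet, Finset.mem_filter, Finset.mem_univ, true_and, Finset.mem_biUnion,
    Finset.mem_Icc, le_min_iff]
  set du := G.dist ρ u with hdu
  set dv := G.dist ρ v with hdv
  constructor
  · rintro ⟨hdist, hlt⟩
    obtain ⟨hcu, hcv, hcom⟩ := meet_spec (ρ := ρ) hT u v
    have htd := tree_dist (ρ := ρ) hT u v
    set c := meet G ρ u v with hc
    refine ⟨dv - c, ⟨by omega, by omega, by omega⟩, ?_, by omega, ?_⟩
    · have e : t - (dv - c) = du - c := by omega
      rw [e]
      exact hcom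
    · by_cases hjt : dv - c = t
      · exact Or.inl hjt
      · refine Or.inr ?_
        intro heq
        have : c + 1 ≤ c := by
          refine meet_max (ρ := ρ) hT (show c + 1 ≤ du by omega) (show c + 1 ≤ dv by omega) ?_
          have e1 : du - (c+1) = t - (dv - c) - 1 := by omega
          have e2 : dv - (c+1) = (dv - c) - 1 := by omega
          rw [e1, e2]
          exact heq
        omega
  · rintro ⟨j, ⟨hj1, hjv, hjt⟩, hcom, hdep, hmin⟩
    have hi : t - j ≤ du := by omega
    have hmeet : meet G ρ u v + j = dv := by
      refine meet_eq hT hi hjv (by omega) hcom ?_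
      rcases hmin with hj | hne
      · left; omega
      · by_cases hi0 : t - j = 0
        · exact Or.inl hi0
        · exact Or.inr ⟨by omega, by omega, hne⟩
    have htd := tree_dist (ρ := ρ) hT u v
    constructor
    · omega
    · omega

lemma AjSet_disjoint {t : ℕ} (v : W) {j1 j2 : ℕ} (hne : j1 ≠ j2) :
    Disjoint (AjSet G ρ t v j1) (AjSet G ρ t v j2) := by
  simp only [Finset.disjoint_left, AjSet, Finset.mem_filter]
  rintro u ⟨-, -, h1, -⟩ ⟨-, -, h2, -⟩
  omega

lemma AjSet_card_top (hT : G.IsTree) {t : ℕ} {v : W} (htv : t ≤ G.dist ρ v) :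
    (AjSet G ρ t v t).card = 1 := by
  have hdep := parIter_dist (ρ := ρ) hT v htv
  have : AjSet G ρ t v t = {(par G ρ)^[t] v} := by
    ext u
    simp only [AjSet, Finset.mem_filter, Finset.mem_univ, true_and, Nat.sub_self,
      Function.iterate_zero_apply, Finset.mem_singleton]
    constructor
    · rintro ⟨h, -, -⟩; exact h
    · rintro rfl
      exact ⟨rfl, by omega, Or.inl trivial⟩
  rw [this, Finset.card_singleton]

lemma AjSet_card_mid {m r : ℕ} (hG : IsPerfectRootedMary m r G ρ) (hm : 2 ≤ m)
    {t k : ℕ} (htk : t = 2*k+1) {v : W} {j : ℕ} (hj1 : k+1 ≤ j) (hjv : j ≤ G.dist ρ v)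
    (hjt : j < t) :
    (AjSet G ρ t v j).card = m^(t-j) - m^(t-j-1) := by
  have hT := hG.1
  have hdle := hG.2.2.2.1
  set dv := G.dist ρ v with hdv
  have hdj := parIter_dist (ρ := ρ) hT v hjv
  have hdj1 := parIter_dist (ρ := ρ) hT v (show j - 1 ≤ dv by omega)
  have hsub : decSet G ρ ((par G ρ)^[j-1] v) (t-j-1) ⊆ decSet G ρ ((par G ρ)^[j] v) (t-j) := by
    intro u hu
    rw [decSet_def] at hu ⊢
    simp only [Finset.mem_filter, Finset.mem_univ, true_and] at hu ⊢
    obtain ⟨hcom, hdep⟩ := hu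
    constructor
    · have e1 : t - j = (t - j - 1) + 1 := by omega
      have e2 : j = (j-1) + 1 := by omega
      rw [e1, Function.iterate_succ_apply', hcom]
      conv_rhs => rw [e2, Function.iterate_succ_apply']
    · omega
  have hset : AjSet G ρ t v j =
      decSet G ρ ((par G ρ)^[j] v) (t-j) \ decSet G ρ ((par G ρ)^[j-1] v) (t-j-1) := by
    ext u
    simp only [AjSet, Finset.mem_filter, Finset.mem_univ, true_and, Finset.mem_sdiff,
      decSet_def]
    constructor
    · rintro ⟨hcom, hdep, hmin⟩
      refine ⟨⟨hcom, by omega⟩, ?_⟩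
      rintro ⟨hcom', -⟩
      rcases hmin with h | h
      · omega
      · exact h hcom'
    · rintro ⟨⟨hcom, hdep⟩, hnot⟩
      refine ⟨hcom, by omega, Or.inr ?_⟩
      intro hcom'
      exact hnot ⟨hcom', by omega⟩
  rw [hset, Finset.card_sdiff_of_subset hsub, decSet_card hG hm, decSet_card hG hm]
  have hc1 : G.dist ρ ((par G ρ)^[j] v) + (t - j) ≤ r := by
    have := hdle v
    omega
  have hc2 : G.dist ρ ((par G ρ)^[j-1] v) + (t - j - 1) ≤ r := by
    have := hdle v
    omega
  rw [if_pos hc1, if_pos hc2]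

lemma ASet_card {m r : ℕ} (hG : IsPerfectRootedMary m r G ρ) (hm : 2 ≤ m)
    {t k : ℕ} (htk : t = 2*k+1) (v : W) :
    (ASet G ρ t v).card = ∑ j ∈ Finset.Icc (k+1) (min (G.dist ρ v) t),
      (if j = t then 1 else m^(t-j) - m^(t-j-1)) := by
  rw [ASet_eq_biUnion hG.1 htk v, Finset.card_biUnion]
  · refine Finset.sum_congr rfl fun j hj => ?_
    simp only [Finset.mem_Icc, le_min_iff] at hj
    by_cases hjt : j = t
    · rw [if_pos hjt, hjt]
      exact AjSet_card_top hG.1 (by omega)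
    · rw [if_neg hjt]
      exact AjSet_card_mid hG hm htk (by omega) (by omega) (by omega)
  · intro j1 _ j2 _ hne
    exact AjSet_disjoint v hne

lemma tele_sum {m t k : ℕ} (hm : 2 ≤ m) (htk : t = 2*k+1) :
    ∀ M, M ≤ 2*k → ∑ j ∈ Finset.Icc (k+1) M, ((m:ℚ)^(t-j) - (m:ℚ)^(t-j-1)) =
      if k+1 ≤ M then (m:ℚ)^k - (m:ℚ)^(t-1-M) else 0 := by
  intro M
  induction M with
  | zero =>
    intro h
    rw [Finset.Icc_eq_empty (by omega), Finset.sum_empty, if_neg (by omega)]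
  | succ n ih =>
    intro h
    by_cases hk : k+1 ≤ n+1
    · rw [Finset.sum_Icc_succ_top hk, if_pos hk]
      by_cases hk2 : k+1 ≤ n
      · rw [ih (by omega), if_pos hk2]
        have e1 : t - 1 - n = t - (n+1) := by omega
        have e2 : t - 1 - (n+1) = t - (n+1) - 1 := by omega
        rw [e1, e2]
        ring
      · have hn : n + 1 = k + 1 := by omega
        rw [ih (by omega), if_neg hk2]
        have e1 : t - (n+1) = k := by omega
        have e2 : t - 1 - (n+1) = t - (n+1) - 1 := by omega
        rw [e1, e2, e1]
        ring
    · rw [Finset.Icc_eq_empty (by omega), Finset.sum_empty, if_neg (by omega)]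

lemma sum_cast_eval {m t k : ℕ} (hm : 2 ≤ m) (htk : t = 2*k+1) (d : ℕ) :
    ((∑ j ∈ Finset.Icc (k+1) (min d t),
        (if j = t then 1 else m^(t-j) - m^(t-j-1)) : ℕ) : ℚ) =
      if d ≤ k then 0 else if d ≤ 2*k then (m:ℚ)^k - (m:ℚ)^(2*k-d) else (m:ℚ)^k := by
  have hcast : ∀ (S : Finset ℕ), (∀ j ∈ S, j ≤ t) →
      ((∑ j ∈ S, (if j = t then 1 else m^(t-j) - m^(t-j-1)) : ℕ) : ℚ) =
      ∑ j ∈ S, (if j = t then 1 else (m:ℚ)^(t-j) - (m:ℚ)^(t-j-1)) := by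
    intro S hS
    rw [Nat.cast_sum]
    refine Finset.sum_congr rfl fun j hj => ?_
    by_cases hjt : j = t
    · simp [hjt]
    · have hle : m^(t-j-1) ≤ m^(t-j) := Nat.pow_le_pow_right (by omega) (by omega)
      rw [if_neg hjt, if_neg hjt, Nat.cast_sub hle, Nat.cast_pow, Nat.cast_pow]
  by_cases h1 : d ≤ k
  · rw [if_pos h1]
    have : min d t < k + 1 := by omega
    rw [Finset.Icc_eq_empty (by omega), Finset.sum_empty, Nat.cast_zero]
  · rw [if_neg h1]
    by_cases h2 : d ≤ 2*k
    · rw [if_pos h2]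
      have hmin : min d t = d := by omega
      rw [hmin, hcast _ (fun j hj => by simp only [Finset.mem_Icc] at hj; omega)]
      have hnotop : ∀ j ∈ Finset.Icc (k+1) d, (if j = t then (1:ℚ) else (m:ℚ)^(t-j) - (m:ℚ)^(t-j-1)) = (m:ℚ)^(t-j) - (m:ℚ)^(t-j-1) := by
        intro j hj
        simp only [Finset.mem_Icc] at hj
        rw [if_neg (by omega)]
      rw [Finset.sum_congr rfl hnotop, tele_sum hm htk d h2, if_pos (by omega)]
      have e : t - 1 - d = 2*k - d := by omega
      rw [e]
    · rw [if_neg h2]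
      have hmin : min d t = t := by omega
      rw [hmin, hcast _ (fun j hj => by simp only [Finset.mem_Icc] at hj; omega)]
      have hins : Finset.Icc (k+1) t = insert t (Finset.Icc (k+1) (2*k)) := by
        ext x; simp only [Finset.mem_insert, Finset.mem_Icc]; omega
      rw [hins, Finset.sum_insert (by simp only [Finset.mem_Icc]; omega), if_pos rfl]
      have hnotop : ∀ j ∈ Finset.Icc (k+1) (2*k), (if j = t then (1:ℚ) else (m:ℚ)^(t-j) - (m:ℚ)^(t-j-1)) = (m:ℚ)^(t-j) - (m:ℚ)^(t-j-1) := by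
        intro j hj
        simp only [Finset.mem_Icc] at hj
        rw [if_neg (by omega)]
      rw [Finset.sum_congr rfl hnotop, tele_sum hm htk (2*k) (le_refl _)]
      by_cases hk0 : k = 0
      · subst hk0
        rw [if_neg (by omega)]
        norm_num
      · rw [if_pos (by omega)]
        have e : t - 1 - 2*k = 0 := by omega
        rw [e, pow_zero]
        ring

lemma final_alg {m r t k : ℕ} (hm : 2 ≤ m) (htk : t = 2*k+1) (htr : t ≤ r) :
    ∑ d ∈ Finset.range (r+1), (m:ℚ)^d *
      (if d ≤ k then 0 else if d ≤ 2*k then (m:ℚ)^k - (m:ℚ)^(2*k-d) else (m:ℚ)^k)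
    = (m:ℚ)^k * ((∑ d ∈ Finset.range (r+1), (m:ℚ)^d) - ∑ d ∈ Finset.range (k+1), (m:ℚ)^d)
      - (k : ℚ) * (m:ℚ)^(2*k) := by
  have hkr : k + 1 ≤ r + 1 := by omega
  have h2kr : 2*k + 1 ≤ r + 1 := by omega
  rw [Finset.range_eq_Ico, ← Finset.sum_Ico_consecutive _ (Nat.zero_le (k+1)) hkr]
  have hfirst : ∑ d ∈ Finset.Ico 0 (k+1), (m:ℚ)^d *
      (if d ≤ k then 0 else if d ≤ 2*k then (m:ℚ)^k - (m:ℚ)^(2*k-d) else (m:ℚ)^k) = 0 := by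
    refine Finset.sum_eq_zero fun d hd => ?_
    simp only [Finset.mem_Ico] at hd
    rw [if_pos (by omega), mul_zero]
  rw [hfirst, zero_add]
  have hsecond : ∀ d ∈ Finset.Ico (k+1) (r+1), (m:ℚ)^d *
      (if d ≤ k then 0 else if d ≤ 2*k then (m:ℚ)^k - (m:ℚ)^(2*k-d) else (m:ℚ)^k)
      = (m:ℚ)^d * (m:ℚ)^k - (m:ℚ)^d * (if d ≤ 2*k then (m:ℚ)^(2*k-d) else 0) := by
    intro d hd
    simp only [Finset.mem_Ico] at hd
    rw [if_neg (by omega)]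
    by_cases h2 : d ≤ 2*k
    · rw [if_pos h2, if_pos h2]; ring
    · rw [if_neg h2, if_neg h2]; ring
  rw [Finset.sum_congr rfl hsecond, Finset.sum_sub_distrib]
  have hA : ∑ d ∈ Finset.Ico (k+1) (r+1), (m:ℚ)^d * (m:ℚ)^k
      = (m:ℚ)^k * ((∑ d ∈ Finset.range (r+1), (m:ℚ)^d)
          - ∑ d ∈ Finset.range (k+1), (m:ℚ)^d) := by
    have hsplit : (∑ d ∈ Finset.Ico 0 (k+1), (m:ℚ)^d) + ∑ d ∈ Finset.Ico (k+1) (r+1), (m:ℚ)^d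
        = ∑ d ∈ Finset.Ico 0 (r+1), (m:ℚ)^d :=
      Finset.sum_Ico_consecutive _ (Nat.zero_le (k+1)) hkr
    have hmid : ∑ d ∈ Finset.Ico (k+1) (r+1), (m:ℚ)^d
        = (∑ d ∈ Finset.range (r+1), (m:ℚ)^d) - ∑ d ∈ Finset.range (k+1), (m:ℚ)^d := by
      rw [← Finset.range_eq_Ico, ← Finset.range_eq_Ico] at hsplit
      linarith [hsplit]
    rw [← Finset.sum_mul, hmid]
    ring
  have hB : ∑ d ∈ Finset.Ico (k+1) (r+1),
      (m:ℚ)^d * (if d ≤ 2*k then (m:ℚ)^(2*k-d) else 0) = (k : ℚ) * (m:ℚ)^(2*k) := by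
    rw [← Finset.sum_Ico_consecutive _ (show k+1 ≤ 2*k+1 by omega) h2kr]
    have h1 : ∀ d ∈ Finset.Ico (k+1) (2*k+1),
        (m:ℚ)^d * (if d ≤ 2*k then (m:ℚ)^(2*k-d) else 0) = (m:ℚ)^(2*k) := by
      intro d hd
      simp only [Finset.mem_Ico] at hd
      rw [if_pos (by omega), ← pow_add]
      congr 1
      omega
    have h2 : ∀ d ∈ Finset.Ico (2*k+1) (r+1),
        (m:ℚ)^d * (if d ≤ 2*k then (m:ℚ)^(2*k-d) else 0) = 0 := by
      intro d hd
      simp only [Finset.mem_Ico] at hd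
      rw [if_neg (by omega), mul_zero]
    rw [Finset.sum_congr rfl h1, Finset.sum_congr rfl h2, Finset.sum_const,
      Finset.sum_const_zero, add_zero, Nat.card_Ico]
    have he : 2*k+1 - (k+1) = k := by omega
    rw [he, nsmul_eq_mul]
  rw [hA, hB]
  rw [← Finset.range_eq_Ico]

section Truncation

variable (G ρ)

def truncSet (k : ℕ) : Set W := {v | G.dist ρ v ≤ k}

noncomputable instance truncDecPred (k : ℕ) : DecidablePred (· ∈ truncSet G ρ k) :=
  fun v => inferInstanceAs (Decidable (G.dist ρ v ≤ k))

abbrev truncGraph (k : ℕ) : SimpleGraph (truncSet G ρ k) := G.induce (truncSet G ρ k)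

noncomputable instance truncDecRel (k : ℕ) : DecidableRel (truncGraph G ρ k).Adj :=
  fun a b => inferInstanceAs (Decidable (G.Adj a.1 b.1))

variable {G ρ}

lemma trunc_adj {k : ℕ} {a b : truncSet G ρ k} :
    (truncGraph G ρ k).Adj a b ↔ G.Adj a.1 b.1 := Iff.rfl

/-- hom to the big graph -/
def truncHom (k : ℕ) : truncGraph G ρ k →g G where
  toFun := Subtype.val
  map_rel' := fun h => h

lemma truncHom_injective (k : ℕ) : Function.Injective (truncHom (G := G) (ρ := ρ) k) :=
  Subtype.val_injective

lemma trunc_walk_transfer {k : ℕ} {a b : W} (w : G.Walk a b)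
    (hsup : ∀ x ∈ w.support, G.dist ρ x ≤ k) (ha : a ∈ truncSet G ρ k)
    (hb : b ∈ truncSet G ρ k) :
    ∃ w' : (truncGraph G ρ k).Walk ⟨a, ha⟩ ⟨b, hb⟩, w'.length = w.length := by
  induction w with
  | nil => exact ⟨SimpleGraph.Walk.nil, rfl⟩
  | @cons a c b hadj p ih =>
    have hc : c ∈ truncSet G ρ k := hsup c (by simp [SimpleGraph.Walk.support_cons])
    obtain ⟨w', hw'⟩ := ih (fun x hx => hsup x (by simp [SimpleGraph.Walk.support_cons, hx])) hc hb
    exact ⟨SimpleGraph.Walk.cons (trunc_adj.2 hadj) w', by simp [hw']⟩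

lemma trunc_geodesic {k : ℕ} (hT : G.IsTree) {b : W} (hb : b ∈ truncSet G ρ k) :
    ∃ w' : (truncGraph G ρ k).Walk ⟨ρ, by simp [truncSet, (dist_root_eq_zero_iff hT).2 rfl]⟩
      ⟨b, hb⟩, w'.length = G.dist ρ b := by
  obtain ⟨p, hp, hpl⟩ := hT.isConnected.exists_path_of_dist ρ b
  have hsup : ∀ x ∈ p.support, G.dist ρ x ≤ k := by
    intro x hx
    have := dist_le_of_mem_support p hx
    have hbk : G.dist ρ b ≤ k := hb
    omega
  obtain ⟨w', hw'⟩ := trunc_walk_transfer p hsup _ hb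
  exact ⟨w', by rw [hw', hpl]⟩

lemma trunc_connected {k : ℕ} (hT : G.IsTree) : (truncGraph G ρ k).Connected := by
  have hρ : ρ ∈ truncSet G ρ k := by simp [truncSet, (dist_root_eq_zero_iff hT).2 rfl]
  have hne : Nonempty (truncSet G ρ k) := ⟨⟨ρ, hρ⟩⟩
  refine ⟨fun a b => ?_⟩
  obtain ⟨wa, -⟩ := trunc_geodesic (k := k) hT a.2
  obtain ⟨wb, -⟩ := trunc_geodesic (k := k) hT b.2
  have h1 : (truncGraph G ρ k).Reachable ⟨ρ, hρ⟩ ⟨a.1, a.2⟩ := ⟨wa⟩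
  have h2 : (truncGraph G ρ k).Reachable ⟨ρ, hρ⟩ ⟨b.1, b.2⟩ := ⟨wb⟩
  exact h1.symm.trans h2

lemma trunc_isTree {k : ℕ} (hT : G.IsTree) : (truncGraph G ρ k).IsTree := by
  rw [SimpleGraph.isTree_iff_existsUnique_path]
  constructor
  · exact ⟨⟨ρ, by simp [truncSet, (dist_root_eq_zero_iff hT).2 rfl]⟩⟩
  · intro a b
    obtain ⟨w⟩ := (trunc_connected (k := k) hT).preconnected a b
    refine ⟨w.bypass, SimpleGraph.Walk.bypass_isPath w, ?_⟩
    intro q hq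
    have huniq := (hT.existsUnique_path a.1 b.1).unique
      (SimpleGraph.Walk.map_isPath_of_injective (truncHom_injective k) hq)
      (SimpleGraph.Walk.map_isPath_of_injective (truncHom_injective k)
        (SimpleGraph.Walk.bypass_isPath w))
    exact SimpleGraph.Walk.map_injective_of_injective (truncHom_injective k) a b huniq

lemma trunc_dist {k : ℕ} (hT : G.IsTree) (b : truncSet G ρ k) :
    (truncGraph G ρ k).dist ⟨ρ, by simp [truncSet, (dist_root_eq_zero_iff hT).2 rfl]⟩ b
      = G.dist ρ b.1 := by
  have hρ : ρ ∈ truncSet G ρ k := by simp [truncSet, (dist_root_eq_zero_iff hT).2 rfl]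
  refine le_antisymm ?_ ?_
  · obtain ⟨w', hw'⟩ := trunc_geodesic (k := k) hT b.2
    calc (truncGraph G ρ k).dist _ b ≤ w'.length := SimpleGraph.dist_le w'
    _ = G.dist ρ b.1 := hw'
  · obtain ⟨w, hwl⟩ := (trunc_connected (k := k) hT).exists_walk_length_eq_dist ⟨ρ, hρ⟩ b
    calc G.dist ρ b.1 ≤ (w.map (truncHom k)).length := SimpleGraph.dist_le _
    _ = (truncGraph G ρ k).dist ⟨ρ, hρ⟩ b := by rw [SimpleGraph.Walk.length_map, hwl]

lemma trunc_degree_lt {m r k : ℕ} (hG : IsPerfectRootedMary m r G ρ) {v : W}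
    (hv : v ∈ truncSet G ρ k) (hlt : G.dist ρ v < k) :
    (truncGraph G ρ k).degree ⟨v, hv⟩ = G.degree v := by
  have hT := hG.1
  rw [SimpleGraph.degree, SimpleGraph.degree]
  refine Finset.card_bij' (fun a _ => a.1) (fun w hw => ⟨w, ?_⟩) ?_ ?_ ?_ ?_
  · rw [SimpleGraph.mem_neighborFinset] at hw
    rcases adj_dist_cases (ρ := ρ) hT hw with hd | hd <;>
      simp only [truncSet, Set.mem_setOf_eq] <;> omega
  · intro a ha
    rw [SimpleGraph.mem_neighborFinset] at ha ⊢
    exact ha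
  · intro w hw
    rw [SimpleGraph.mem_neighborFinset] at hw ⊢
    exact hw
  · intro a _; rfl
  · intro w _; rfl

lemma trunc_degree_leaf {m r k : ℕ} (hG : IsPerfectRootedMary m r G ρ) {v : W}
    (hv : v ∈ truncSet G ρ k) (heq : G.dist ρ v = k) (hk : 1 ≤ k) :
    (truncGraph G ρ k).degree ⟨v, hv⟩ = 1 := by
  have hT := hG.1
  have hvρ : v ≠ ρ := by
    intro h
    rw [h, (dist_root_eq_zero_iff hT).2 rfl] at heq
    omega
  have hpar : par G ρ v ∈ truncSet G ρ k := by
    have := (par_spec hT hvρ).2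
    simp only [truncSet, Set.mem_setOf_eq]
    omega
  have : (truncGraph G ρ k).neighborFinset ⟨v, hv⟩ = {⟨par G ρ v, hpar⟩} := by
    ext w
    rw [SimpleGraph.mem_neighborFinset, Finset.mem_singleton]
    constructor
    · intro h
      have h' : G.Adj v w.1 := trunc_adj.1 h
      rcases adj_dist_cases (ρ := ρ) hT h' with hd | hd
      · exfalso
        have hwk : G.dist ρ w.1 ≤ k := w.2
        omega
      · have := par_eq (ρ := ρ) hT h' (by omega)
        exact Subtype.ext this.symm
    · rintro rfl
      exact trunc_adj.2 (par_spec hT hvρ).1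
  rw [SimpleGraph.degree, this, Finset.card_singleton]

lemma trunc_perfect {m r k : ℕ} (hG : IsPerfectRootedMary m r G ρ) (hm : 2 ≤ m)
    (hk : k ≤ r) :
    IsPerfectRootedMary m k (truncGraph G ρ k)
      ⟨ρ, by simp [truncSet, (dist_root_eq_zero_iff hG.1).2 rfl]⟩ := by
  have hT := hG.1
  have hρ : ρ ∈ truncSet G ρ k := by simp [truncSet, (dist_root_eq_zero_iff hT).2 rfl]
  obtain ⟨-, hroot, hdeg, hdle, -, hleaf⟩ := id hG
  have hdρ : G.dist ρ ρ = 0 := (dist_root_eq_zero_iff hT).2 rfl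
  refine ⟨trunc_isTree hT, ?_, ?_, ?_, ?_, ?_⟩
  · intro hk1
    rw [trunc_degree_lt hG hρ (by omega)]
    exact hroot (by omega)
  · rintro ⟨v, hv⟩ hne
    have hvρ : v ≠ ρ := fun h => hne (Subtype.ext h)
    have hvk : G.dist ρ v ≤ k := hv
    by_cases hlt : G.dist ρ v < k
    · rw [trunc_degree_lt hG hv hlt]
      rcases hdeg v hvρ with h1 | h1
      · exfalso
        have := hleaf v h1
        omega
      · exact Or.inr h1
    · have heq : G.dist ρ v = k := by omega
      have hk1 : 1 ≤ k := by
        rcases Nat.eq_zero_or_pos k with h0 | h0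
        · exfalso
          rw [h0] at hvk
          exact hvρ ((dist_root_eq_zero_iff hT).1 (by omega))
        · exact h0
      exact Or.inl (trunc_degree_leaf hG hv heq hk1)
  · rintro ⟨v, hv⟩
    rw [trunc_dist hT]
    exact hv
  · have hlevel : ((Finset.univ.filter fun v => G.dist ρ v = k)).Nonempty := by
      rw [← Finset.card_pos, level_card hG hm hk]
      positivity
    obtain ⟨v, hvmem⟩ := hlevel
    simp only [Finset.mem_filter, Finset.mem_univ, true_and] at hvmem
    refine ⟨⟨v, by simp [truncSet, hvmem]⟩, ?_⟩
    rw [trunc_dist hT]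
    exact hvmem
  · rintro ⟨v, hv⟩ hdeg1
    rw [trunc_dist hT]
    show G.dist ρ v = k
    have hvk : G.dist ρ v ≤ k := hv
    by_cases hlt : G.dist ρ v < k
    · exfalso
      by_cases hvρ : v = ρ
      · subst hvρ
        have hk1 : 0 < k := by omega
        rw [trunc_degree_lt hG hv hlt, hroot (by omega)] at hdeg1
        omega
      · rw [trunc_degree_lt hG hv hlt] at hdeg1
        rcases hdeg v hvρ with h1 | h1
        · have := hleaf v h1
          omega
        · omega
    · omega

end Truncation


end Development

theorem rooted_path_count_odd_small (m r : ℕ) (hm : 2 ≤ m)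
    {W : Type} [Fintype W] [DecidableEq W] (G : SimpleGraph W) [DecidableRel G.Adj]
    (ρ : W) (hG : IsPerfectRootedMary m r G ρ)
    (VR : ℕ → ℚ)
    (hVR : ∀ (d : ℕ) (X : Type) [Fintype X] (H : SimpleGraph X) [DecidableRel H.Adj]
      (ρ' : X), IsPerfectRootedMary m d H ρ' → (Fintype.card X : ℚ) = VR d)
    (t : ℕ) (ht : Odd t) (ht1 : 1 ≤ t) (htr : t ≤ r) :
    (pathCount G t : ℚ) =
      (m : ℚ) ^ ((t - 1) / 2) * (VR r - VR ((t - 1) / 2)) -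
        (((t - 1) / 2 : ℕ) : ℚ) * (m : ℚ) ^ (t - 1) := by
  obtain ⟨k, hk⟩ := ht
  have hkt : (t - 1)/2 = k := by omega
  have ht1' : t - 1 = 2*k := by omega
  have htk : t = 2*k+1 := by omega
  have hT := hG.1
  rw [hkt, ht1']
  -- the two values of VR that matter
  have hVRr : VR r = ∑ d ∈ Finset.range (r+1), (m:ℚ)^d := by
    rw [← hVR r W G ρ hG, card_univ_levels hG hm]
    push_cast
    rfl
  have hVRk : VR k = ∑ d ∈ Finset.range (k+1), (m:ℚ)^d := by
    have hperf := trunc_perfect (ρ := ρ) hG hm (show k ≤ r by omega)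
    rw [← hVR k (truncSet G ρ k) (truncGraph G ρ k) _ hperf, card_univ_levels hperf hm]
    push_cast
    rfl
  -- parity: odd distance forces different depths
  have hparity : ∀ u v : W, G.dist u v = t → G.dist ρ u ≠ G.dist ρ v := by
    intro u v hd heq
    have := tree_dist (ρ := ρ) hT u v
    omega
  -- pathCount as an ordered count
  classical
  set O := Finset.univ.filter
    (fun p : W × W => G.dist p.1 p.2 = t ∧ G.dist ρ p.1 < G.dist ρ p.2) with hO
  have hcount : pathCount G t = O.card := by
    rw [pathCount]
    refine (Finset.card_bij (fun (p : W × W) (_ : p ∈ O) => s(p.1, p.2)) ?_ ?_ ?_).symm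
    · intro p hp
      simp only [hO, Finset.mem_filter, Finset.mem_univ, true_and] at hp ⊢
      exact ⟨p.1, p.2, rfl, hp.1⟩
    · intro p hp q hq heq
      simp only [hO, Finset.mem_filter, Finset.mem_univ, true_and] at hp hq
      rw [Sym2.eq_iff] at heq
      rcases heq with ⟨h1, h2⟩ | ⟨h1, h2⟩
      · exact Prod.ext h1 h2
      · exfalso
        rw [h1, h2] at hp
        omega
    · intro q hq
      simp only [Finset.mem_filter, Finset.mem_univ, true_and] at hq
      obtain ⟨u, v, rfl, hd⟩ := hq
      have hne := hparity u v hd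
      rcases Nat.lt_or_ge (G.dist ρ u) (G.dist ρ v) with h | h
      · refine ⟨(u, v), ?_, rfl⟩
        simp only [hO, Finset.mem_filter, Finset.mem_univ, true_and]
        exact ⟨hd, h⟩
      · refine ⟨(v, u), ?_, Sym2.eq_swap.symm⟩
        simp only [hO, Finset.mem_filter, Finset.mem_univ, true_and]
        constructor
        · rw [SimpleGraph.dist_comm (u := v) (v := u)]
          exact hd
        · omega
  -- fiberwise over the deeper endpoint
  have hfiber : O.card = ∑ v : W, (ASet G ρ t v).card := by
    rw [Finset.card_eq_sum_card_fiberwise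
      (f := fun p : W × W => p.2) (t := Finset.univ) (fun p _ => Finset.mem_univ _)]
    refine Finset.sum_congr rfl fun v _ => ?_
    refine Finset.card_bij (fun (p : W × W) (_ : p ∈ O.filter fun p => p.2 = v) => p.1)
      ?_ ?_ ?_
    · intro p hp
      simp only [hO, Finset.mem_filter, Finset.mem_univ, true_and] at hp
      obtain ⟨⟨hd, hlt⟩, h2⟩ := hp
      simp only [ASet, Finset.mem_filter, Finset.mem_univ, true_and]
      rw [← h2]
      exact ⟨hd, hlt⟩
    · intro p hp q hq heq
      simp only [hO, Finset.mem_filter, Finset.mem_univ, true_and] at hp hq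
      exact Prod.ext heq (by rw [hp.2, hq.2])
    · intro u hu
      simp only [ASet, Finset.mem_filter, Finset.mem_univ, true_and] at hu
      refine ⟨(u, v), ?_, rfl⟩
      simp only [hO, Finset.mem_filter, Finset.mem_univ, true_and]
      exact ⟨hu, trivial⟩
  -- evaluate each fiber
  have hAv : ∀ v : W, ((ASet G ρ t v).card : ℚ) =
      (if G.dist ρ v ≤ k then 0 else if G.dist ρ v ≤ 2*k then
        (m:ℚ)^k - (m:ℚ)^(2*k - G.dist ρ v) else (m:ℚ)^k) := by
    intro v
    rw [ASet_card hG hm htk v]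
    exact sum_cast_eval hm htk (G.dist ρ v)
  have hsum1 : (pathCount G t : ℚ) = ∑ v : W, ((ASet G ρ t v).card : ℚ) := by
    rw [hcount, hfiber]
    push_cast
    rfl
  -- group by depth
  have hsum2 : ∑ v : W, ((ASet G ρ t v).card : ℚ)
      = ∑ d ∈ Finset.range (r+1), (m:ℚ)^d *
          (if d ≤ k then 0 else if d ≤ 2*k then (m:ℚ)^k - (m:ℚ)^(2*k-d) else (m:ℚ)^k) := by
    rw [← Finset.sum_fiberwise_of_maps_to
      (g := fun v : W => G.dist ρ v) (t := Finset.range (r+1))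
      (fun v _ => Finset.mem_range.2 (Nat.lt_succ_of_le (hG.2.2.2.1 v)))
      (fun v => ((ASet G ρ t v).card : ℚ))]
    refine Finset.sum_congr rfl fun d hd => ?_
    have hterm : ∀ v ∈ Finset.univ.filter (fun v : W => G.dist ρ v = d),
        ((ASet G ρ t v).card : ℚ) =
        (if d ≤ k then 0 else if d ≤ 2*k then (m:ℚ)^k - (m:ℚ)^(2*k-d) else (m:ℚ)^k) := by
      intro v hv
      simp only [Finset.mem_filter, Finset.mem_univ, true_and] at hv
      rw [hAv v, hv]
    rw [Finset.sum_congr rfl hterm, Finset.sum_const,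
      level_card hG hm (show d ≤ r by simpa [Nat.lt_succ_iff] using hd), nsmul_eq_mul]
    push_cast
    ring
  rw [hsum1, hsum2, hVRr, hVRk]
  exact final_alg hm htk htr
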